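/- arXiv:2308.07835 — 3 statements merged into one kernel-verified Lean document; each statement's English description precedes it below -/
import Mathlib

section
/- Let Z be a real random variable satisfying P(|Z| < x) ≤ ρ·x for all x ≤ δ, with δ, ρ > 0, and let Z_ℓ be an approximation with E[|Z_ℓ - Z|^q] < ∞ for some q > 2. Let Z_ℓ^{(0)}, Z_ℓ^{(1)} be two copies of Z_ℓ (coupled with Z on the same probability space). Then for all 2 ≤ p ≤ q there exists b > 0, independent of ℓ, such that E[| max{(Z_ℓ^{(0)}+Z_ℓ^{(1)})/2, 0} - (max{Z_ℓ^{(0)},0}+max{Z_ℓ^{(1)},0})/2 |^p] ≤ b · E[|Z_ℓ - Z|^q]^{(p+1)/(q+1)}. -/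
open MeasureTheory

lemma max_zero_eq' (x : ℝ) : max x 0 = (x + |x|) / 2 := by
  rcases abs_cases x with ⟨h, h'⟩ | ⟨h, h'⟩
  · rw [max_eq_left h', h]; ring
  · rw [max_eq_right h'.le, h]; ring

lemma aux1' (a b z : ℝ) :
    |max ((a+b)/2) 0 - (max a 0 + max b 0)/2| ≤ max |a-z| |b-z| ∧
    (max ((a+b)/2) 0 - (max a 0 + max b 0)/2 ≠ 0 → |z| ≤ max |a-z| |b-z|) := by
  have h2 : |(a+b)/2| = |a+b|/2 := by rw [abs_div, abs_two]
  have hm : max ((a+b)/2) 0 - (max a 0 + max b 0)/2 = (|a+b| - |a| - |b|)/4 := by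
    rw [max_zero_eq', max_zero_eq', max_zero_eq', h2]; ring
  have habs : |max ((a+b)/2) 0 - (max a 0 + max b 0)/2| = (|a| + |b| - |a+b|)/4 := by
    rw [hm, abs_of_nonpos (by have := abs_add_le a b; linarith)]; ring
  have h0 : (0:ℝ) ≤ max |a-z| |b-z| := le_max_of_le_left (abs_nonneg _)
  have e1 : a - z ≤ max |a-z| |b-z| := (le_abs_self _).trans (le_max_left _ _)
  have e2 : z - a ≤ max |a-z| |b-z| := by
    have h := neg_le_abs (a - z); have h' := le_max_left |a-z| |b-z|; linarith
  have e3 : b - z ≤ max |a-z| |b-z| := (le_abs_self _).trans (le_max_right _ _)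
  have e4 : z - b ≤ max |a-z| |b-z| := by
    have h := neg_le_abs (b - z); have h' := le_max_right |a-z| |b-z|; linarith
  constructor
  · rw [habs]
    rcases abs_cases a with ⟨f1, g1⟩ | ⟨f1, g1⟩ <;>
    rcases abs_cases b with ⟨f2, g2⟩ | ⟨f2, g2⟩ <;>
    rcases abs_cases (a+b) with ⟨f3, g3⟩ | ⟨f3, g3⟩ <;>
    rcases abs_cases z with ⟨f4, g4⟩ | ⟨f4, g4⟩ <;> linarith
  · rw [hm]
    intro hne
    have hle : |a+b| ≤ |a| + |b| := abs_add_le a b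
    have hne' : |a| + |b| - |a+b| ≠ 0 := fun h =>
      hne (by rw [show |a+b| - |a| - |b| = -(|a| + |b| - |a+b|) by ring, h]; norm_num)
    have hpos : 0 < |a| + |b| - |a+b| := lt_of_le_of_ne (by linarith) (Ne.symm hne')
    rcases abs_cases a with ⟨f1, g1⟩ | ⟨f1, g1⟩ <;>
    rcases abs_cases b with ⟨f2, g2⟩ | ⟨f2, g2⟩ <;>
    rcases abs_cases (a+b) with ⟨f3, g3⟩ | ⟨f3, g3⟩ <;>
    rcases abs_cases z with ⟨f4, g4⟩ | ⟨f4, g4⟩ <;> linarith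

lemma aux2' (p q ε a b z : ℝ) (hp : 0 < p) (hpq : p ≤ q) (hε : 0 < ε) :
    |max ((a+b)/2) 0 - (max a 0 + max b 0)/2| ^ p ≤
      (if |z| < ε then ε ^ p else 0) + ε ^ (p - q) * max |a-z| |b-z| ^ q := by
  obtain ⟨hWD, hzD⟩ := aux1' a b z
  have hW0 : (0:ℝ) ≤ |max ((a+b)/2) 0 - (max a 0 + max b 0)/2| := abs_nonneg _
  have hD0 : (0:ℝ) ≤ max |a-z| |b-z| := le_max_of_le_left (abs_nonneg _)
  have hterm2 : 0 ≤ ε ^ (p-q) * max |a-z| |b-z| ^ q :=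
    mul_nonneg (Real.rpow_nonneg hε.le _) (Real.rpow_nonneg hD0 _)
  by_cases hW : max ((a+b)/2) 0 - (max a 0 + max b 0)/2 = 0
  · rw [hW, abs_zero, Real.zero_rpow hp.ne']
    have : (0:ℝ) ≤ (if |z| < ε then ε ^ p else 0) := by
      split_ifs
      · exact Real.rpow_nonneg hε.le _
      · exact le_rfl
    linarith
  · have hzD' := hzD hW
    rcases lt_or_ge (max |a-z| |b-z|) ε with h | h
    · have hif : (if |z| < ε then ε ^ p else 0) = ε ^ p := if_pos (lt_of_le_of_lt hzD' h)
      rw [hif]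
      have : |max ((a+b)/2) 0 - (max a 0 + max b 0)/2| ^ p ≤ ε ^ p :=
        Real.rpow_le_rpow hW0 (hWD.trans h.le) hp.le
      linarith
    · have hDpos : 0 < max |a-z| |b-z| := lt_of_lt_of_le hε h
      have h1 : |max ((a+b)/2) 0 - (max a 0 + max b 0)/2| ^ p ≤ max |a-z| |b-z| ^ p :=
        Real.rpow_le_rpow hW0 hWD hp.le
      have h2 : max |a-z| |b-z| ^ p = max |a-z| |b-z| ^ (p-q) * max |a-z| |b-z| ^ q := by
        rw [← Real.rpow_add hDpos]; ring_nf
      have h3 : max |a-z| |b-z| ^ (p-q) ≤ ε ^ (p-q) :=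
        Real.rpow_le_rpow_of_nonpos hε h (by linarith)
      have h4 : max |a-z| |b-z| ^ (p-q) * max |a-z| |b-z| ^ q ≤ ε ^ (p-q) * max |a-z| |b-z| ^ q :=
        mul_le_mul_of_nonneg_right h3 (Real.rpow_nonneg hD0 _)
      have hif0 : (0:ℝ) ≤ (if |z| < ε then ε ^ p else 0) := by
        split_ifs
        · exact Real.rpow_nonneg hε.le _
        · exact le_rfl
      linarith

lemma eps_pow' (δ M e u t : ℝ) (hδ : 0 < δ) (hM : 0 < M) (he : 0 < e) :
    (δ * (e/M) ^ (1/u)) ^ t = δ ^ t * M ^ (-(t/u)) * e ^ (t/u) := by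
  rw [Real.mul_rpow hδ.le (Real.rpow_nonneg (by positivity) _),
      ← Real.rpow_mul (by positivity : (0:ℝ) ≤ e/M), show 1/u*t = t/u by ring,
      Real.div_rpow he.le hM.le, Real.rpow_neg hM.le]
  ring

theorem stmt7 {Ω : Type*} [MeasurableSpace Ω] (μ : Measure Ω) [IsProbabilityMeasure μ]
    (q p δ ρ K : ℝ) (hq : 2 < q) (hp2 : 2 ≤ p) (hpq : p ≤ q) (hδ : 0 < δ) (hρ : 0 < ρ)
    (Z : Ω → ℝ) (Zl : Fin 2 → ℕ → Ω → ℝ)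
    (hZ : Measurable Z) (hZl : ∀ i ℓ, Measurable (Zl i ℓ))
    (hcdf : ∀ x : ℝ, 0 < x → x ≤ δ → (μ {ω | |Z ω| < x}).toReal ≤ ρ * x)
    (E : ℕ → ℝ) (hE0 : ∀ ℓ, 0 ≤ E ℓ)
    (hint : ∀ i ℓ, Integrable (fun ω => |Zl i ℓ ω - Z ω| ^ q) μ)
    (hE : ∀ i ℓ, ∫ ω, |Zl i ℓ ω - Z ω| ^ q ∂μ ≤ E ℓ)
    (hEK : ∀ ℓ, E ℓ ≤ K) :
    ∃ b > 0, ∀ ℓ : ℕ,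
      ∫ ω, |max ((Zl 0 ℓ ω + Zl 1 ℓ ω) / 2) 0 -
          (max (Zl 0 ℓ ω) 0 + max (Zl 1 ℓ ω) 0) / 2| ^ p ∂μ ≤
        b * E ℓ ^ ((p + 1) / (q + 1)) := by
  have hq1 : (0:ℝ) < q + 1 := by linarith
  have hppos : (0:ℝ) < p := by linarith
  have hexp : (0:ℝ) < (p + 1) / (q + 1) := div_pos (by linarith) hq1
  set M : ℝ := max K 1 with hMdef
  have hM1 : (1:ℝ) ≤ M := le_max_right _ _
  have hMpos : (0:ℝ) < M := lt_of_lt_of_le one_pos hM1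
  refine ⟨ρ * δ ^ (p+1) * M ^ (-((p+1)/(q+1))) + 2 * δ ^ (p-q) * M ^ ((q-p)/(q+1)), by positivity, ?_⟩
  intro ℓ
  by_cases hEl : E ℓ = 0
  · -- degenerate case: the approximations agree with Z a.e.
    have key : ∀ i : Fin 2, ∀ᵐ ω ∂μ, Zl i ℓ ω = Z ω := by
      intro i
      have hnn : 0 ≤ᵐ[μ] fun ω => |Zl i ℓ ω - Z ω| ^ q :=
        ae_of_all _ fun ω => Real.rpow_nonneg (abs_nonneg _) q
      have hzero : ∫ ω, |Zl i ℓ ω - Z ω| ^ q ∂μ = 0 :=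
        le_antisymm ((hE i ℓ).trans hEl.le)
          (integral_nonneg fun ω => Real.rpow_nonneg (abs_nonneg _) q)
      have hae := (integral_eq_zero_iff_of_nonneg_ae hnn (hint i ℓ)).mp hzero
      filter_upwards [hae] with ω hω
      have h1 : |Zl i ℓ ω - Z ω| ^ q = 0 := hω
      have h2 : |Zl i ℓ ω - Z ω| = 0 :=
        (Real.rpow_eq_zero (abs_nonneg _) (by linarith : q ≠ 0)).mp h1
      have := abs_eq_zero.mp h2
      linarith [sub_eq_zero.mp this, le_refl (Z ω)]
    have hzero : (fun ω => |max ((Zl 0 ℓ ω + Zl 1 ℓ ω) / 2) 0 -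
        (max (Zl 0 ℓ ω) 0 + max (Zl 1 ℓ ω) 0) / 2| ^ p) =ᵐ[μ] 0 := by
      filter_upwards [key 0, key 1] with ω h0 h1
      rw [h0, h1, show (Z ω + Z ω)/2 = Z ω by ring,
        show (max (Z ω) 0 + max (Z ω) 0)/2 = max (Z ω) 0 by ring, sub_self, abs_zero,
        Real.zero_rpow hppos.ne']
      rfl
    rw [integral_congr_ae hzero, hEl, Real.zero_rpow hexp.ne', mul_zero]
    simp
  · have hElpos : 0 < E ℓ := lt_of_le_of_ne (hE0 ℓ) (Ne.symm hEl)
    have hEM : E ℓ ≤ M := (hEK ℓ).trans (le_max_left _ _)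
    set ε : ℝ := δ * (E ℓ / M) ^ ((1:ℝ)/(q+1)) with hεdef
    have hr : 0 < (E ℓ / M) ^ ((1:ℝ)/(q+1)) := Real.rpow_pos_of_pos (div_pos hElpos hMpos) _
    have hεpos : 0 < ε := mul_pos hδ hr
    have hr1 : (E ℓ / M) ^ ((1:ℝ)/(q+1)) ≤ 1 :=
      Real.rpow_le_one (by positivity) (div_le_one_of_le₀ hEM hMpos.le) (by positivity)
    have hεδ : ε ≤ δ := by
      calc ε = δ * (E ℓ / M) ^ ((1:ℝ)/(q+1)) := rfl
        _ ≤ δ * 1 := mul_le_mul_of_nonneg_left hr1 hδ.le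
        _ = δ := mul_one δ
    set D : Ω → ℝ := fun ω => max |Zl 0 ℓ ω - Z ω| |Zl 1 ℓ ω - Z ω| with hDdef
    have hDmeas : Measurable fun ω => D ω ^ q :=
      (((hZl 0 ℓ).sub hZ).abs.max ((hZl 1 ℓ).sub hZ).abs).pow measurable_const
    have hptD : ∀ ω, D ω ^ q ≤ |Zl 0 ℓ ω - Z ω| ^ q + |Zl 1 ℓ ω - Z ω| ^ q := by
      intro ω
      rcases max_cases |Zl 0 ℓ ω - Z ω| |Zl 1 ℓ ω - Z ω| with ⟨h, _⟩ | ⟨h, _⟩ <;>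
        simp only [hDdef, h] <;>
        [linarith [Real.rpow_nonneg (abs_nonneg (Zl 1 ℓ ω - Z ω)) q];
         linarith [Real.rpow_nonneg (abs_nonneg (Zl 0 ℓ ω - Z ω)) q]]
    have hDq_int : Integrable (fun ω => D ω ^ q) μ := by
      refine Integrable.mono' ((hint 0 ℓ).add (hint 1 ℓ)) hDmeas.aestronglyMeasurable
        (ae_of_all _ fun ω => ?_)
      rw [Real.norm_eq_abs, abs_of_nonneg (Real.rpow_nonneg (le_max_of_le_left (abs_nonneg _)) q)]
      exact hptD ω
    set S : Set Ω := {ω | |Z ω| < ε} with hSdef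
    have hS : MeasurableSet S := measurableSet_lt hZ.abs measurable_const
    have hind_int : Integrable (S.indicator fun _ => ε ^ p) μ :=
      (integrable_const (ε ^ p)).indicator hS
    have gform : (fun ω => (if |Z ω| < ε then ε ^ p else 0) + ε ^ (p-q) * D ω ^ q)
        = fun ω => S.indicator (fun _ => ε ^ p) ω + ε ^ (p-q) * D ω ^ q := by
      funext ω
      simp [Set.indicator_apply, hSdef, Set.mem_setOf_eq]
    have hDq_le : ∫ ω, D ω ^ q ∂μ ≤ 2 * E ℓ := by
      calc ∫ ω, D ω ^ q ∂μ
          ≤ ∫ ω, (|Zl 0 ℓ ω - Z ω| ^ q + |Zl 1 ℓ ω - Z ω| ^ q) ∂μ :=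
            integral_mono hDq_int ((hint 0 ℓ).add (hint 1 ℓ)) hptD
        _ = (∫ ω, |Zl 0 ℓ ω - Z ω| ^ q ∂μ) + ∫ ω, |Zl 1 ℓ ω - Z ω| ^ q ∂μ :=
            integral_add (hint 0 ℓ) (hint 1 ℓ)
        _ ≤ E ℓ + E ℓ := add_le_add (hE 0 ℓ) (hE 1 ℓ)
        _ = 2 * E ℓ := by ring
    have hstep1 : ∫ ω, |max ((Zl 0 ℓ ω + Zl 1 ℓ ω) / 2) 0 -
          (max (Zl 0 ℓ ω) 0 + max (Zl 1 ℓ ω) 0) / 2| ^ p ∂μ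
        ≤ ∫ ω, (S.indicator (fun _ => ε ^ p) ω + ε ^ (p-q) * D ω ^ q) ∂μ := by
      rw [← gform]
      refine integral_mono_of_nonneg (ae_of_all _ fun ω => Real.rpow_nonneg (abs_nonneg _) p)
        ?_ (ae_of_all _ fun ω => aux2' p q ε (Zl 0 ℓ ω) (Zl 1 ℓ ω) (Z ω) hppos hpq hεpos)
      rw [gform]
      exact hind_int.add (hDq_int.const_mul _)
    have hstep2 : ∫ ω, (S.indicator (fun _ => ε ^ p) ω + ε ^ (p-q) * D ω ^ q) ∂μ
        = (μ S).toReal * ε ^ p + ε ^ (p-q) * ∫ ω, D ω ^ q ∂μ := by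
      rw [integral_add hind_int (hDq_int.const_mul _), integral_indicator_const _ hS,
        integral_const_mul, smul_eq_mul, Measure.real]
    have hcdf' : (μ S).toReal ≤ ρ * ε := hcdf ε hεpos hεδ
    have hstep3 : (μ S).toReal * ε ^ p + ε ^ (p-q) * ∫ ω, D ω ^ q ∂μ
        ≤ (ρ * ε) * ε ^ p + ε ^ (p-q) * (2 * E ℓ) :=
      add_le_add (mul_le_mul_of_nonneg_right hcdf' (Real.rpow_nonneg hεpos.le _))
        (mul_le_mul_of_nonneg_left hDq_le (Real.rpow_nonneg hεpos.le _))
    have hA : ε ^ (p+1) = δ ^ (p+1) * M ^ (-((p+1)/(q+1))) * E ℓ ^ ((p+1)/(q+1)) := by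
      rw [hεdef, show ((1:ℝ)/(q+1)) = 1/(q+1) by norm_num]
      exact eps_pow' δ M (E ℓ) (q+1) (p+1) hδ hMpos hElpos
    have hB : ε ^ (p-q) = δ ^ (p-q) * M ^ (-((p-q)/(q+1))) * E ℓ ^ ((p-q)/(q+1)) :=
      eps_pow' δ M (E ℓ) (q+1) (p-q) hδ hMpos hElpos
    have hC : (ρ * ε) * ε ^ p = ρ * ε ^ (p+1) := by
      rw [Real.rpow_add hεpos, Real.rpow_one]; ring
    have hD2 : E ℓ ^ ((p-q)/(q+1)) * E ℓ = E ℓ ^ ((p+1)/(q+1)) := by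
      rw [← Real.rpow_add_one hElpos.ne']
      congr 1
      field_simp
      ring
    have hM2 : M ^ (-((p-q)/(q+1))) = M ^ ((q-p)/(q+1)) := by
      rw [show -((p-q)/(q+1)) = (q-p)/(q+1) by ring]
    have hfinal : (ρ * ε) * ε ^ p + ε ^ (p-q) * (2 * E ℓ)
        = (ρ * δ ^ (p+1) * M ^ (-((p+1)/(q+1))) + 2 * δ ^ (p-q) * M ^ ((q-p)/(q+1)))
          * E ℓ ^ ((p+1)/(q+1)) := by
      rw [hC, hA, hB, hM2]
      rw [show δ ^ (p-q) * M ^ ((q-p)/(q+1)) * E ℓ ^ ((p-q)/(q+1)) * (2 * E ℓ)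
          = 2 * δ ^ (p-q) * M ^ ((q-p)/(q+1)) * (E ℓ ^ ((p-q)/(q+1)) * E ℓ) by ring, hD2]
      ring
    calc ∫ ω, |max ((Zl 0 ℓ ω + Zl 1 ℓ ω) / 2) 0 -
          (max (Zl 0 ℓ ω) 0 + max (Zl 1 ℓ ω) 0) / 2| ^ p ∂μ
        ≤ (μ S).toReal * ε ^ p + ε ^ (p-q) * ∫ ω, D ω ^ q ∂μ := hstep1.trans (le_of_eq hstep2)
      _ ≤ (ρ * ε) * ε ^ p + ε ^ (p-q) * (2 * E ℓ) := hstep3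
      _ = _ := hfinal
end

section
/- Let Z, Z0, Z1 be random variables and P(|Z| < x) ≤ ρx for all 0 < x ≤ δ. Then for any p ≥ 1, q > p, L > 0, and 0 < ψ ≤ δ: E[|Z0 - Z1|^p · 1{|Z| < |Z0 - Z1|}] ≤ ρ ψ^{p+1} + ψ^{p-q} E[|Z0 - Z1|^q]. -/
open MeasureTheory

theorem stmt10 {Ω : Type*} [MeasurableSpace Ω] (μ : Measure Ω) [IsProbabilityMeasure μ]
    (Z Z0 Z1 : Ω → ℝ) (hZ : Measurable Z) (hZ0 : Measurable Z0) (hZ1 : Measurable Z1)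
    (p q ρ δ ψ : ℝ) (hp : 1 ≤ p) (hq : p < q) (hρ : 0 < ρ) (hδ : 0 < δ)
    (hψ0 : 0 < ψ) (hψδ : ψ ≤ δ)
    (hcdf : ∀ x : ℝ, 0 < x → x ≤ δ → (μ {ω | |Z ω| < x}).toReal ≤ ρ * x)
    (hint : Integrable (fun ω => |Z0 ω - Z1 ω| ^ q) μ) :
    ∫ ω in {ω | |Z ω| < |Z0 ω - Z1 ω|}, |Z0 ω - Z1 ω| ^ p ∂μ ≤
      ρ * ψ ^ (p + 1) + ψ ^ (p - q) * ∫ ω, |Z0 ω - Z1 ω| ^ q ∂μ := by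
  set f : Ω → ℝ := fun ω => |Z0 ω - Z1 ω| with hf
  have hfm : Measurable f := (hZ0.sub hZ1).abs
  have hfnn : ∀ ω, 0 ≤ f ω := fun ω => abs_nonneg _
  set A : Set Ω := {ω | |Z ω| < f ω} with hA
  have hAm : MeasurableSet A := measurableSet_lt hZ.abs hfm
  set B : Set Ω := {ω | f ω < ψ} with hB
  have hBm : MeasurableSet B := measurableSet_lt hfm measurable_const
  -- pointwise bound : f^p ≤ ψ^p + ψ^(p-q) * f^q
  have key : ∀ ω, f ω ^ p ≤ ψ ^ p + ψ ^ (p - q) * f ω ^ q := by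
    intro ω
    rcases lt_or_ge (f ω) ψ with h | h
    · have h1 : f ω ^ p ≤ ψ ^ p := Real.rpow_le_rpow (hfnn ω) h.le (by linarith)
      have h2 : 0 ≤ ψ ^ (p - q) * f ω ^ q :=
        mul_nonneg (Real.rpow_nonneg hψ0.le _) (Real.rpow_nonneg (hfnn ω) _)
      linarith
    · have hfpos : 0 < f ω := lt_of_lt_of_le hψ0 h
      have h1 : f ω ^ p = f ω ^ (p - q) * f ω ^ q := by
        rw [← Real.rpow_add hfpos]; ring_nf
      have h2 : f ω ^ (p - q) ≤ ψ ^ (p - q) :=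
        Real.rpow_le_rpow_of_nonpos hψ0 h (by linarith)
      have h3 : f ω ^ p ≤ ψ ^ (p - q) * f ω ^ q := by
        rw [h1]
        exact mul_le_mul_of_nonneg_right h2 (Real.rpow_nonneg (hfnn ω) _)
      have h4 : 0 ≤ ψ ^ p := Real.rpow_nonneg hψ0.le _
      linarith
  have hintp : Integrable (fun ω => f ω ^ p) μ := by
    refine Integrable.mono' ((integrable_const (ψ ^ p)).add (hint.const_mul (ψ ^ (p - q))))
      (((Real.continuous_rpow_const (by linarith : (0:ℝ) ≤ p)).measurable.comp hfm).aestronglyMeasurable) ?_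
    filter_upwards with ω
    rw [Real.norm_of_nonneg (Real.rpow_nonneg (hfnn ω) _)]
    exact key ω
  have hsplit : ∫ ω in A, f ω ^ p ∂μ =
      (∫ ω in A ∩ B, f ω ^ p ∂μ) + ∫ ω in A ∩ Bᶜ, f ω ^ p ∂μ := by
    have hdisj : Disjoint (A ∩ B) (A ∩ Bᶜ) :=
      Set.disjoint_left.2 (fun ω h1 h2 => h2.2 h1.2)
    rw [← setIntegral_union hdisj (hAm.inter hBm.compl) (hintp.integrableOn)
      (hintp.integrableOn), Set.inter_union_compl]
  rw [hsplit]
  have bound1 : ∫ ω in A ∩ B, f ω ^ p ∂μ ≤ ρ * ψ ^ (p + 1) := by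
    have h1 : ∫ ω in A ∩ B, f ω ^ p ∂μ ≤ ∫ _ω in A ∩ B, ψ ^ p ∂μ := by
      refine setIntegral_mono_on hintp.integrableOn (integrableOn_const ?_)
        (hAm.inter hBm) ?_
      · exact (lt_of_le_of_lt (measure_mono (Set.subset_univ _)) (measure_lt_top μ _)).ne
      · intro ω hω
        exact Real.rpow_le_rpow (hfnn ω) (le_of_lt hω.2) (by linarith)
    have h2 : (μ (A ∩ B)).toReal ≤ ρ * ψ := by
      refine le_trans ?_ (hcdf ψ hψ0 hψδ)
      refine ENNReal.toReal_mono (measure_ne_top μ _) (measure_mono ?_)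
      intro ω hω
      exact lt_trans (show |Z ω| < f ω from hω.1) (show f ω < ψ from hω.2)
    rw [setIntegral_const, smul_eq_mul] at h1
    refine h1.trans ?_
    calc (μ (A ∩ B)).toReal * ψ ^ p ≤ (ρ * ψ) * ψ ^ p :=
          mul_le_mul_of_nonneg_right h2 (Real.rpow_nonneg hψ0.le _)
      _ = ρ * ψ ^ (p + 1) := by
          rw [Real.rpow_add hψ0, Real.rpow_one]; ring
  have bound2 : ∫ ω in A ∩ Bᶜ, f ω ^ p ∂μ ≤ ψ ^ (p - q) * ∫ ω, f ω ^ q ∂μ := by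
    have h1 : ∫ ω in A ∩ Bᶜ, f ω ^ p ∂μ ≤ ∫ ω in A ∩ Bᶜ, ψ ^ (p - q) * f ω ^ q ∂μ := by
      refine setIntegral_mono_on hintp.integrableOn
        ((hint.const_mul _).integrableOn) (hAm.inter hBm.compl) ?_
      intro ω hω
      have hψf : ψ ≤ f ω := not_lt.1 hω.2
      have hfpos : 0 < f ω := lt_of_lt_of_le hψ0 hψf
      have h1 : f ω ^ p = f ω ^ (p - q) * f ω ^ q := by
        rw [← Real.rpow_add hfpos]; ring_nf
      rw [h1]
      exact mul_le_mul_of_nonneg_right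
        (Real.rpow_le_rpow_of_nonpos hψ0 hψf (by linarith)) (Real.rpow_nonneg (hfnn ω) _)
    have h2 : ∫ ω in A ∩ Bᶜ, ψ ^ (p - q) * f ω ^ q ∂μ ≤ ∫ ω, ψ ^ (p - q) * f ω ^ q ∂μ := by
      refine setIntegral_le_integral (hint.const_mul _) ?_
      filter_upwards with ω
      exact mul_nonneg (Real.rpow_nonneg hψ0.le _) (Real.rpow_nonneg (hfnn ω) _)
    simp only [integral_const_mul] at h1 h2
    exact h1.trans h2
  linarith
end

section
/- Suppose E[|D_k|^p] ≤ a·k^λ·2^{-βpk/2} for all k ≥ 0 for constants a > 0, λ ≥ 0, β ≥ 1, p ≥ 2, and let M_k = max{M_0·2^{ℓ-ζk}, 1} with 1 ≤ ζ ≤ β. Then Σ_{k=0}^{ℓ} M_k^{-1} E[|D_k|^p]^{2/p} ≤ C·ℓ^{2λ/p}·2^{-ℓ}·(1 if ζ < β, else (ℓ+1)) for a constant C independent of ℓ. -/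
theorem stmt11 (e : ℕ → ℝ) (a lam β ζ p : ℝ) (M0 : ℕ)
    (ha : 0 < a) (hlam : 0 ≤ lam) (hβ : 1 ≤ β) (hp : 2 ≤ p)
    (hζ1 : 1 ≤ ζ) (hζβ : ζ ≤ β) (hM0 : 0 < M0)
    (he0 : ∀ k, 0 ≤ e k)
    (he : ∀ k : ℕ, e k ≤ a * (k : ℝ) ^ lam * 2 ^ (-(β * p * (k : ℝ)) / 2)) :
    ∃ C > 0, ∀ ℓ : ℕ, 1 ≤ ℓ →
      ∑ k ∈ Finset.range (ℓ + 1),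
          (max ((M0 : ℝ) * 2 ^ ((ℓ : ℝ) - ζ * (k : ℝ))) 1)⁻¹ * e k ^ (2 / p) ≤
        C * (ℓ : ℝ) ^ (2 * lam / p) * 2 ^ (-(ℓ : ℝ)) *
          (if ζ < β then 1 else (ℓ : ℝ) + 1) := by
  have hp0 : (0:ℝ) < p := lt_of_lt_of_le two_pos hp
  have hq0 : (0:ℝ) < 2 / p := by positivity
  have hs0 : (0:ℝ) ≤ 2 * lam / p := by positivity
  set r : ℝ := (2:ℝ) ^ (ζ - β) with hr
  have hr0 : 0 ≤ r := (Real.rpow_pos_of_pos two_pos _).le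
  have hcif : 0 < (if ζ < β then (1 - r)⁻¹ else 1) := by
    split_ifs with h
    · have hr1 : r < 1 := Real.rpow_lt_one_of_one_lt_of_neg one_lt_two (by linarith)
      have : 0 < 1 - r := by linarith
      positivity
    · norm_num
  refine ⟨(M0:ℝ)⁻¹ * a ^ (2/p) * (if ζ < β then (1 - r)⁻¹ else 1), ?_, ?_⟩
  · have : (0:ℝ) < (M0:ℝ)⁻¹ := by positivity
    have ha' : (0:ℝ) < a ^ (2/p) := Real.rpow_pos_of_pos ha _
    positivity
  intro ℓ hℓ
  have key : ∀ k ∈ Finset.range (ℓ + 1),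
      (max ((M0 : ℝ) * 2 ^ ((ℓ : ℝ) - ζ * (k : ℝ))) 1)⁻¹ * e k ^ (2 / p) ≤
        ((M0:ℝ)⁻¹ * a ^ (2/p) * (ℓ:ℝ) ^ (2 * lam / p) * 2 ^ (-(ℓ:ℝ))) * r ^ k := by
    intro k hk
    have hkℓ : (k:ℝ) ≤ (ℓ:ℝ) := by
      exact_mod_cast Nat.lt_succ_iff.mp (Finset.mem_range.mp hk)
    have hx : (0:ℝ) < (M0 : ℝ) * 2 ^ ((ℓ : ℝ) - ζ * (k : ℝ)) := by positivity
    have hA : (max ((M0 : ℝ) * 2 ^ ((ℓ : ℝ) - ζ * (k : ℝ))) 1)⁻¹ ≤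
        ((M0 : ℝ) * 2 ^ ((ℓ : ℝ) - ζ * (k : ℝ)))⁻¹ :=
      inv_anti₀ hx (le_max_left _ _)
    have hB : e k ^ (2/p) ≤ (a * (k : ℝ) ^ lam * 2 ^ (-(β * p * (k : ℝ)) / 2)) ^ (2/p) :=
      Real.rpow_le_rpow (he0 k) (he k) hq0.le
    have hC : (a * (k : ℝ) ^ lam * 2 ^ (-(β * p * (k : ℝ)) / 2)) ^ (2/p) =
        a ^ (2/p) * (k:ℝ) ^ (2 * lam / p) * 2 ^ (-(β * (k:ℝ))) := by
      rw [Real.mul_rpow (by positivity) (by positivity),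
          Real.mul_rpow ha.le (by positivity),
          ← Real.rpow_mul (Nat.cast_nonneg k), ← Real.rpow_mul (by norm_num : (0:ℝ) ≤ 2)]
      have e1 : lam * (2/p) = 2 * lam / p := by field_simp
      have e2 : -(β * p * (k:ℝ)) / 2 * (2/p) = -(β * (k:ℝ)) := by
        field_simp
      rw [e1, e2]
    have hD : (max ((M0 : ℝ) * 2 ^ ((ℓ : ℝ) - ζ * (k : ℝ))) 1)⁻¹ * e k ^ (2 / p) ≤
        ((M0 : ℝ) * 2 ^ ((ℓ : ℝ) - ζ * (k : ℝ)))⁻¹ *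
          (a ^ (2/p) * (k:ℝ) ^ (2 * lam / p) * 2 ^ (-(β * (k:ℝ)))) := by
      apply mul_le_mul hA (hC ▸ hB) (Real.rpow_nonneg (he0 k) _) (by positivity)
    refine hD.trans ?_
    have h2 : ((2:ℝ) ^ ((ℓ:ℝ) - ζ * (k:ℝ)))⁻¹ * 2 ^ (-(β * (k:ℝ))) =
        2 ^ (-(ℓ:ℝ)) * r ^ k := by
      rw [← Real.rpow_neg (by norm_num : (0:ℝ) ≤ 2),
          ← Real.rpow_add two_pos, hr,
          ← Real.rpow_natCast ((2:ℝ) ^ (ζ - β)) k,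
          ← Real.rpow_mul (by norm_num : (0:ℝ) ≤ 2),
          ← Real.rpow_add two_pos]
      congr 1
      ring
    have hk' : (k:ℝ) ^ (2 * lam / p) ≤ (ℓ:ℝ) ^ (2 * lam / p) :=
      Real.rpow_le_rpow (Nat.cast_nonneg k) hkℓ hs0
    calc ((M0 : ℝ) * 2 ^ ((ℓ : ℝ) - ζ * (k : ℝ)))⁻¹ *
          (a ^ (2/p) * (k:ℝ) ^ (2 * lam / p) * 2 ^ (-(β * (k:ℝ))))
        = (M0:ℝ)⁻¹ * a ^ (2/p) * (k:ℝ) ^ (2 * lam / p) *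
            (((2:ℝ) ^ ((ℓ:ℝ) - ζ * (k:ℝ)))⁻¹ * 2 ^ (-(β * (k:ℝ)))) := by
          rw [mul_inv]; ring
      _ = (M0:ℝ)⁻¹ * a ^ (2/p) * (k:ℝ) ^ (2 * lam / p) * (2 ^ (-(ℓ:ℝ)) * r ^ k) := by
          rw [h2]
      _ ≤ ((M0:ℝ)⁻¹ * a ^ (2/p) * (ℓ:ℝ) ^ (2 * lam / p) * 2 ^ (-(ℓ:ℝ))) * r ^ k := by
          have h1 : (0:ℝ) ≤ (M0:ℝ)⁻¹ * a ^ (2/p) := by positivity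
          have h3 : (0:ℝ) ≤ 2 ^ (-(ℓ:ℝ)) * r ^ k := by positivity
          have hm := mul_le_mul_of_nonneg_right
            (mul_le_mul_of_nonneg_left hk' h1) h3
          refine le_trans (le_of_eq (by ring)) (le_trans hm (le_of_eq (by ring)))
  have hsum : ∑ k ∈ Finset.range (ℓ + 1), r ^ k ≤
      (if ζ < β then (1 - r)⁻¹ else 1) * (if ζ < β then 1 else (ℓ:ℝ) + 1) := by
    split_ifs with h
    · have hr1 : r < 1 := Real.rpow_lt_one_of_one_lt_of_neg one_lt_two (by linarith)
      rw [mul_one]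
      exact (Summable.sum_le_tsum _ (fun i _ => by positivity)
        (summable_geometric_of_lt_one hr0 hr1)).trans
        (le_of_eq (tsum_geometric_of_lt_one hr0 hr1))
    · have hζβ' : ζ = β := le_antisymm hζβ (not_lt.1 h)
      have : r = 1 := by rw [hr, hζβ', sub_self, Real.rpow_zero]
      simp [this]
  calc ∑ k ∈ Finset.range (ℓ + 1),
        (max ((M0 : ℝ) * 2 ^ ((ℓ : ℝ) - ζ * (k : ℝ))) 1)⁻¹ * e k ^ (2 / p)
      ≤ ∑ k ∈ Finset.range (ℓ + 1),
          ((M0:ℝ)⁻¹ * a ^ (2/p) * (ℓ:ℝ) ^ (2 * lam / p) * 2 ^ (-(ℓ:ℝ))) * r ^ k :=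
        Finset.sum_le_sum key
    _ = ((M0:ℝ)⁻¹ * a ^ (2/p) * (ℓ:ℝ) ^ (2 * lam / p) * 2 ^ (-(ℓ:ℝ))) *
          ∑ k ∈ Finset.range (ℓ + 1), r ^ k := by rw [Finset.mul_sum]
    _ ≤ ((M0:ℝ)⁻¹ * a ^ (2/p) * (ℓ:ℝ) ^ (2 * lam / p) * 2 ^ (-(ℓ:ℝ))) *
          ((if ζ < β then (1 - r)⁻¹ else 1) * (if ζ < β then 1 else (ℓ:ℝ) + 1)) := by
        apply mul_le_mul_of_nonneg_left hsum (by positivity)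
    _ = (M0:ℝ)⁻¹ * a ^ (2/p) * (if ζ < β then (1 - r)⁻¹ else 1) *
          (ℓ:ℝ) ^ (2 * lam / p) * 2 ^ (-(ℓ:ℝ)) * (if ζ < β then 1 else (ℓ:ℝ) + 1) := by
        ring
end
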